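/- Under a random replacement in a system of n ≥ 2 agents (uniform departure followed by independent arrival with mean 0, variance σ²), if additionally E[x̄² ] ≤ σ²/n (which holds when initial values are i.i.d. with mean 0 and variance σ² and the dynamics consist of value-independent gossips, arrivals and departures), then E[Var(x')] ≤ ((n² − n − 1)/n²)·E[Var(x)] + ((n² − 1)/n³)·σ². -/

import Mathlib

open Finset MeasureTheory

noncomputable def mean {n : ℕ} (x : Fin n → ℝ) : ℝ := (∑ k, x k) / n
noncomputable def varOf {n : ℕ} (x : Fin n → ℝ) : ℝ := (∑ k, (x k - mean x) ^ 2) / n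

/-- The vector `x` with its `j`-th entry removed. -/
def removeAt {n : ℕ} (j : Fin (n + 1)) (x : Fin (n + 1) → ℝ) : Fin n → ℝ :=
  fun k => x (j.succAbove k)

lemma varOf_eq {N : ℕ} (hN : (N:ℝ) ≠ 0) (x : Fin N → ℝ) :
    varOf x = (∑ k, x k ^ 2) / N - (mean x) ^ 2 := by
  have hS : (∑ k, x k) = N * mean x := by rw [mean]; field_simp
  have h : ∀ k, (x k - mean x) ^ 2 = x k ^ 2 - 2 * mean x * x k + mean x ^ 2 := by
    intro k; ring
  rw [varOf]
  simp_rw [h]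
  rw [Finset.sum_add_distrib, Finset.sum_sub_distrib, ← Finset.mul_sum, hS,
    Finset.sum_const, card_univ, Fintype.card_fin]
  field_simp
  ring

lemma varOf_snoc {n : ℕ} (j : Fin (n + 1)) (x : Fin (n + 1) → ℝ) (w : ℝ) :
    varOf (Fin.snoc (removeAt j x) w) =
      ((∑ k, x k ^ 2) - x j ^ 2) / ((n:ℝ)+1) - ((∑ k, x k) - x j) ^ 2 / ((n:ℝ)+1) ^ 2
      + (-2 * ((∑ k, x k) - x j) / ((n:ℝ)+1) ^ 2) * w
      + (1 / ((n:ℝ)+1) - 1 / ((n:ℝ)+1) ^ 2) * w ^ 2 := by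
  have hN : ((n:ℝ) + 1) ≠ 0 := by positivity
  have h1 : (∑ k : Fin (n+1), (Fin.snoc (removeAt j x) w : Fin (n+1) → ℝ) k ^ 2)
      = ((∑ k, x k ^ 2) - x j ^ 2) + w ^ 2 := by
    rw [Fin.sum_univ_castSucc]
    simp only [Fin.snoc_castSucc, Fin.snoc_last, removeAt]
    rw [Fin.sum_univ_succAbove (fun k => x k ^ 2) j]
    ring
  have h2 : (∑ k : Fin (n+1), (Fin.snoc (removeAt j x) w : Fin (n+1) → ℝ) k)
      = ((∑ k, x k) - x j) + w := by
    rw [Fin.sum_univ_castSucc]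
    simp only [Fin.snoc_castSucc, Fin.snoc_last, removeAt]
    rw [Fin.sum_univ_succAbove (fun k => x k) j]
    ring
  rw [varOf_eq (by push_cast; positivity) _, mean, h1, h2]
  push_cast
  field_simp
  ring


set_option maxHeartbeats 1600000 in
/-- Random replacement in a system of `N = n+1 ≥ 2` agents with random state `X`.
Under the bound `E[x̄²] ≤ σ²/N`, the expected variance after replacement satisfies
`E[Var(x')] ≤ ((N²−N−1)/N²)·E[Var(x)] + ((N²−1)/N³)·σ²`. -/
theorem replacement_expected_variance_bound {n : ℕ} (hn : 1 ≤ n)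
    {Ω₁ : Type*} [MeasureSpace Ω₁] [IsProbabilityMeasure (volume : Measure Ω₁)]
    {Ω₂ : Type*} [MeasureSpace Ω₂] [IsProbabilityMeasure (volume : Measure Ω₂)]
    (X : Ω₁ → Fin (n + 1) → ℝ) (v : Ω₂ → ℝ) (σ : ℝ)
    (hX : ∀ k, Integrable (fun ω₁ => X ω₁ k))
    (hX2 : ∀ k, Integrable (fun ω₁ => (X ω₁ k) ^ 2))
    (hv1 : ∫ ω₂, v ω₂ = 0) (hv2 : ∫ ω₂, (v ω₂) ^ 2 = σ ^ 2)
    (hint : Integrable v) (hint2 : Integrable (fun ω₂ => (v ω₂) ^ 2))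
    (hmeanbd : ∫ ω₁, (mean (X ω₁)) ^ 2 ≤ σ ^ 2 / ((n : ℝ) + 1)) :
    (∑ j : Fin (n + 1), ∫ ω₁, ∫ ω₂, varOf (Fin.snoc (removeAt j (X ω₁)) (v ω₂)))
        / ((n : ℝ) + 1)
      ≤ ((((n : ℝ) + 1) ^ 2 - ((n : ℝ) + 1) - 1) / ((n : ℝ) + 1) ^ 2)
          * (∫ ω₁, varOf (X ω₁))
        + ((((n : ℝ) + 1) ^ 2 - 1) / ((n : ℝ) + 1) ^ 3) * σ ^ 2 := by
  set N : ℝ := (n : ℝ) + 1 with hNdef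
  have hN0 : N ≠ 0 := by positivity
  have hNpos : 0 < N := by positivity
  have hN1 : (2:ℝ) ≤ N := by
    have : (1:ℝ) ≤ (n:ℝ) := by exact_mod_cast hn
    rw [hNdef]; linarith
  -- inner integral over ω₂
  have key : ∀ (j : Fin (n+1)) (ω₁ : Ω₁),
      (∫ ω₂, varOf (Fin.snoc (removeAt j (X ω₁)) (v ω₂)))
        = ((∑ k, X ω₁ k ^ 2) - X ω₁ j ^ 2) / N - ((∑ k, X ω₁ k) - X ω₁ j) ^ 2 / N ^ 2
          + (1 / N - 1 / N ^ 2) * σ ^ 2 := by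
    intro j ω₁
    have hre : (fun ω₂ => varOf (Fin.snoc (removeAt j (X ω₁)) (v ω₂)))
        = fun ω₂ => (((∑ k, X ω₁ k ^ 2) - X ω₁ j ^ 2) / N
            - ((∑ k, X ω₁ k) - X ω₁ j) ^ 2 / N ^ 2
          + (-2 * ((∑ k, X ω₁ k) - X ω₁ j) / N ^ 2) * v ω₂)
          + (1 / N - 1 / N ^ 2) * (v ω₂) ^ 2 := by
      funext ω₂; rw [varOf_snoc]
    rw [hre]
    have e1 := integral_add (μ := volume)
      (f := fun ω₂ => ((∑ k, X ω₁ k ^ 2) - X ω₁ j ^ 2) / N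
            - ((∑ k, X ω₁ k) - X ω₁ j) ^ 2 / N ^ 2
          + (-2 * ((∑ k, X ω₁ k) - X ω₁ j) / N ^ 2) * v ω₂)
      (g := fun ω₂ => (1 / N - 1 / N ^ 2) * (v ω₂) ^ 2)
      ((integrable_const _).add (hint.const_mul _)) (hint2.const_mul _)
    rw [e1]
    rw [integral_add (integrable_const _) (hint.const_mul _)]
    rw [integral_const, integral_const_mul, integral_const_mul, hv1, hv2]
    simp
  -- integrability facts over ω₁
  have hQint : Integrable (fun ω₁ => ∑ k, X ω₁ k ^ 2) :=
    integrable_finset_sum _ (fun k _ => hX2 k)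
  have hmul : ∀ j k, Integrable (fun ω₁ => X ω₁ j * X ω₁ k) := by
    intro j k
    refine Integrable.mono ((hX2 j).add (hX2 k)) ((hX j).1.mul (hX k).1) ?_
    filter_upwards with ω₁
    simp only [Real.norm_eq_abs, Pi.add_apply, abs_mul]
    rw [abs_of_nonneg (a := X ω₁ j ^ 2 + X ω₁ k ^ 2) (by positivity)]
    nlinarith [sq_nonneg (|X ω₁ j| - |X ω₁ k|), sq_abs (X ω₁ j), sq_abs (X ω₁ k),
      abs_nonneg (X ω₁ j), abs_nonneg (X ω₁ k)]
  have hS2int : Integrable (fun ω₁ => (∑ k, X ω₁ k) ^ 2) := by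
    have h : (fun ω₁ => (∑ k, X ω₁ k) ^ 2)
        = fun ω₁ => ∑ j : Fin (n+1), ∑ k : Fin (n+1), X ω₁ j * X ω₁ k := by
      funext ω₁; rw [sq, Finset.sum_mul_sum]
    rw [h]
    exact integrable_finset_sum _
      (fun j _ => integrable_finset_sum _ (fun k _ => hmul j k))
  have hSXint : ∀ j, Integrable (fun ω₁ => (∑ k, X ω₁ k) * X ω₁ j) := by
    intro j
    have h : (fun ω₁ => (∑ k, X ω₁ k) * X ω₁ j)
        = fun ω₁ => ∑ k : Fin (n+1), X ω₁ k * X ω₁ j := by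
      funext ω₁; rw [Finset.sum_mul]
    rw [h]; exact integrable_finset_sum _ fun k _ => hmul k j
  have hgint : ∀ j : Fin (n+1), Integrable (fun ω₁ =>
      ((∑ k, X ω₁ k ^ 2) - X ω₁ j ^ 2) / N - ((∑ k, X ω₁ k) - X ω₁ j) ^ 2 / N ^ 2
        + (1 / N - 1 / N ^ 2) * σ ^ 2) := by
    intro j
    have h : (fun ω₁ =>
        ((∑ k, X ω₁ k ^ 2) - X ω₁ j ^ 2) / N - ((∑ k, X ω₁ k) - X ω₁ j) ^ 2 / N ^ 2
          + (1 / N - 1 / N ^ 2) * σ ^ 2)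
        = fun ω₁ => (((∑ k, X ω₁ k ^ 2) - X ω₁ j ^ 2) / N
          - ((∑ k, X ω₁ k) ^ 2 - 2 * ((∑ k, X ω₁ k) * X ω₁ j) + X ω₁ j ^ 2) / N ^ 2)
          + (1 / N - 1 / N ^ 2) * σ ^ 2 := by
      funext ω₁; ring
    rw [h]
    exact (((hQint.sub (hX2 j)).div_const N).sub
      (((hS2int.sub ((hSXint j).const_mul 2)).add (hX2 j)).div_const (N ^ 2))).add
      (integrable_const _)
  -- mean squared
  have hmean_pt : ∀ ω₁, (mean (X ω₁)) ^ 2 = (∑ k, X ω₁ k) ^ 2 / N ^ 2 := by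
    intro ω₁
    rw [mean, div_pow]
    push_cast
    rw [← hNdef]
  have hmean_eq : (fun ω₁ => (mean (X ω₁)) ^ 2)
      = fun ω₁ => (∑ k, X ω₁ k) ^ 2 / N ^ 2 := funext fun ω₁ => hmean_pt ω₁
  have hmean2int : Integrable (fun ω₁ => (mean (X ω₁)) ^ 2) := by
    rw [hmean_eq]; exact hS2int.div_const _
  -- variance identity
  have hvarint : ∫ ω₁, varOf (X ω₁)
      = (∫ ω₁, ∑ k, X ω₁ k ^ 2) / N - (∫ ω₁, (∑ k, X ω₁ k) ^ 2) / N ^ 2 := by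
    have h : (fun ω₁ => varOf (X ω₁))
        = fun ω₁ => (∑ k, X ω₁ k ^ 2) / N - (∑ k, X ω₁ k) ^ 2 / N ^ 2 := by
      funext ω₁
      rw [varOf_eq (by push_cast; positivity) (X ω₁), hmean_pt ω₁]
      push_cast
      rw [← hNdef]
    rw [h, integral_sub (hQint.div_const N) (hS2int.div_const _),
      integral_div, integral_div]
  -- rewrite hmeanbd
  rw [hmean_eq] at hmeanbd
  have hmb : (∫ ω₁, (∑ k, X ω₁ k) ^ 2) / N ^ 2 ≤ σ ^ 2 / N := by
    rwa [integral_div] at hmeanbd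
  -- rewrite LHS : push inner integral, move sum inside
  simp_rw [key]
  rw [← integral_finset_sum _ (fun j _ => hgint j)]
  -- pointwise simplification of the sum over j
  have hsum : ∀ ω₁ : Ω₁, (∑ j : Fin (n+1),
      (((∑ k, X ω₁ k ^ 2) - X ω₁ j ^ 2) / N - ((∑ k, X ω₁ k) - X ω₁ j) ^ 2 / N ^ 2
        + (1 / N - 1 / N ^ 2) * σ ^ 2))
      = (1 - 1/N - 1/N^2) * (∑ k, X ω₁ k ^ 2)
        + (2/N^2 - 1/N) * (∑ k, X ω₁ k) ^ 2 + (1 - 1/N) * σ ^ 2 := by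
    intro ω₁
    have hterm : ∀ j : Fin (n+1),
        (((∑ k, X ω₁ k ^ 2) - X ω₁ j ^ 2) / N - ((∑ k, X ω₁ k) - X ω₁ j) ^ 2 / N ^ 2
          + (1 / N - 1 / N ^ 2) * σ ^ 2)
        = ((∑ k, X ω₁ k ^ 2) / N - (∑ k, X ω₁ k) ^ 2 / N ^ 2
            + (1 / N - 1 / N ^ 2) * σ ^ 2)
          + (2 * (∑ k, X ω₁ k) / N ^ 2) * X ω₁ j
          - (1 / N + 1 / N ^ 2) * X ω₁ j ^ 2 := by
      intro j; ring
    rw [Finset.sum_congr rfl (fun j _ => hterm j)]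
    rw [Finset.sum_sub_distrib, Finset.sum_add_distrib, Finset.sum_const,
      ← Finset.mul_sum, ← Finset.mul_sum, card_univ, Fintype.card_fin,
      nsmul_eq_mul]
    push_cast
    rw [← hNdef]
    field_simp
    ring
  simp_rw [hsum]
  -- compute the ω₁ integral
  have i1 : Integrable (fun ω₁ => (1 - 1/N - 1/N^2) * (∑ k, X ω₁ k ^ 2)) :=
    hQint.const_mul _
  have i2 : Integrable (fun ω₁ => (2/N^2 - 1/N) * (∑ k, X ω₁ k) ^ 2) :=
    hS2int.const_mul _
  have e2 := integral_add (μ := volume)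
    (f := fun ω₁ => (1 - 1/N - 1/N^2) * (∑ k, X ω₁ k ^ 2)
      + (2/N^2 - 1/N) * (∑ k, X ω₁ k) ^ 2)
    (g := fun _ => (1 - 1/N) * σ ^ 2) (i1.add i2) (integrable_const _)
  have e3 := integral_add (μ := volume)
    (f := fun ω₁ => (1 - 1/N - 1/N^2) * (∑ k, X ω₁ k ^ 2))
    (g := fun ω₁ => (2/N^2 - 1/N) * (∑ k, X ω₁ k) ^ 2) i1 i2
  rw [e2, e3, integral_const_mul, integral_const_mul, integral_const]
  simp only [measure_univ, probReal_univ, ENNReal.toReal_one, smul_eq_mul, one_mul]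
  rw [hvarint]
  -- final algebra
  set IQ : ℝ := ∫ ω₁, ∑ k, X ω₁ k ^ 2 with hIQ
  set IS2 : ℝ := ∫ ω₁, (∑ k, X ω₁ k) ^ 2 with hIS2
  have hdiff : ((N ^ 2 - N - 1) / N ^ 2) * (IQ / N - IS2 / N ^ 2)
        + ((N ^ 2 - 1) / N ^ 3) * σ ^ 2
      - (((1 - 1/N - 1/N^2) * IQ + (2/N^2 - 1/N) * IS2 + (1 - 1/N) * σ ^ 2) / N)
      = ((N - 1) / N ^ 4) * (N * σ ^ 2 - IS2) := by
    field_simp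
    ring
  have hnn : 0 ≤ ((N - 1) / N ^ 4) * (N * σ ^ 2 - IS2) := by
    apply mul_nonneg
    · apply div_nonneg (by linarith) (by positivity)
    · rw [div_le_div_iff₀ (by positivity) hNpos] at hmb
      nlinarith
  linarith
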